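/- Let α, β > −1, n ≥ 1, let u : ℝ → ℝ be twice differentiable, and let x_0,…,x_n be distinct points such that u(x_0) = −1, u(x_1),…,u(x_n) are the n distinct roots of the Jacobi polynomial G = P_n^{α,β+1}, u(x_0),…,u(x_n) are pairwise distinct, and u'(x_i) ≠ 0 for all i. Let L_j be the generalized Lagrange functions on these nodes and D the matrix with entries d_{kj} = L_j'(x_k). Then the first diagonal entry satisfies d_{00} = − u'(x_0) · n · (α+β+n+2) / (2(β+2)). -/

import Mathlib

/-- Jacobi polynomials `P_n^{α,β}` defined by the three-term recurrence. -/
noncomputable def jacobiP (α β : ℝ) : ℕ → ℝ → ℝ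
  | 0, _ => 1
  | 1, x => (α + β + 2) * x / 2 + (α - β) / 2
  | K + 2, x =>
      ((2 * ((K : ℝ) + 1) + α + β + 1) * (2 * ((K : ℝ) + 1) + α + β + 2) /
            (2 * (((K : ℝ) + 1) + 1) * (((K : ℝ) + 1) + α + β + 1)) * x -
          (β ^ 2 - α ^ 2) * (2 * ((K : ℝ) + 1) + α + β + 1) /
            (2 * (((K : ℝ) + 1) + 1) * (((K : ℝ) + 1) + α + β + 1) *
              (2 * ((K : ℝ) + 1) + α + β))) *
        jacobiP α β (K + 1) x -
      (((K : ℝ) + 1) + α) * (((K : ℝ) + 1) + β) * (2 * ((K : ℝ) + 1) + α + β + 2) /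
            ((((K : ℝ) + 1) + 1) * (((K : ℝ) + 1) + α + β + 1) * (2 * ((K : ℝ) + 1) + α + β)) *
        jacobiP α β K x

open Finset
open Polynomial

/-- recurrence coefficient a_k for k = K+1 -/
noncomputable def jA (α β : ℝ) (K : ℕ) : ℝ :=
  (2 * ((K : ℝ) + 1) + α + β + 1) * (2 * ((K : ℝ) + 1) + α + β + 2) /
    (2 * (((K : ℝ) + 1) + 1) * (((K : ℝ) + 1) + α + β + 1))

noncomputable def jB (α β : ℝ) (K : ℕ) : ℝ :=
  (β ^ 2 - α ^ 2) * (2 * ((K : ℝ) + 1) + α + β + 1) /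
    (2 * (((K : ℝ) + 1) + 1) * (((K : ℝ) + 1) + α + β + 1) * (2 * ((K : ℝ) + 1) + α + β))

noncomputable def jC (α β : ℝ) (K : ℕ) : ℝ :=
  (((K : ℝ) + 1) + α) * (((K : ℝ) + 1) + β) * (2 * ((K : ℝ) + 1) + α + β + 2) /
    ((((K : ℝ) + 1) + 1) * (((K : ℝ) + 1) + α + β + 1) * (2 * ((K : ℝ) + 1) + α + β))

noncomputable def jacobiPoly (α β : ℝ) : ℕ → ℝ[X]
  | 0 => 1
  | 1 => C ((α + β + 2) / 2) * X + C ((α - β) / 2)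
  | K + 2 => (C (jA α β K) * X - C (jB α β K)) * jacobiPoly α β (K + 1)
      - C (jC α β K) * jacobiPoly α β K

theorem jacobiPoly_eval (α β : ℝ) : ∀ (k : ℕ) (t : ℝ),
    (jacobiPoly α β k).eval t = jacobiP α β k t
  | 0, t => by simp [jacobiPoly, jacobiP]
  | 1, t => by simp [jacobiPoly, jacobiP]; ring
  | (K + 2), t => by
    simp only [jacobiPoly, jacobiP, eval_sub, eval_mul, eval_add, eval_C, eval_X,
      jacobiPoly_eval α β (K + 1) t, jacobiPoly_eval α β K t, jA, jB, jC]

/-- leading coefficient sequence -/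
noncomputable def jLC (α β : ℝ) : ℕ → ℝ
  | 0 => 1
  | 1 => (α + β + 2) / 2
  | K + 2 => jA α β K * jLC α β (K + 1)

theorem jacobiPoly_natDegree_le (α β : ℝ) : ∀ k, (jacobiPoly α β k).natDegree ≤ k
  | 0 => by simp [jacobiPoly]
  | 1 => by
    simp only [jacobiPoly]
    refine le_trans (natDegree_add_le _ _) ?_
    exact max_le ((natDegree_C_mul_le _ X).trans (by simp)) (by simp)
  | K + 2 => by
    simp only [jacobiPoly]
    refine le_trans (natDegree_sub_le _ _) (max_le ?_ ?_)
    · refine le_trans (natDegree_mul_le) ?_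
      have h1 : (C (jA α β K) * X - C (jB α β K)).natDegree ≤ 1 := by
        refine le_trans (natDegree_sub_le _ _) (max_le ?_ (by simp))
        exact (natDegree_C_mul_le _ X).trans (by simp)
      have := jacobiPoly_natDegree_le α β (K + 1)
      omega
    · refine le_trans (natDegree_mul_le) ?_
      have := jacobiPoly_natDegree_le α β K
      simp only [natDegree_C]
      omega

theorem jacobiPoly_coeff_top (α β : ℝ) : ∀ k, (jacobiPoly α β k).coeff k = jLC α β k
  | 0 => by simp [jacobiPoly, jLC]
  | 1 => by simp [jacobiPoly, jLC, coeff_add, coeff_C_mul, coeff_X_one]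
  | K + 2 => by
    have h1 : (jacobiPoly α β (K + 1)).coeff (K + 2) = 0 :=
      coeff_eq_zero_of_natDegree_lt (lt_of_le_of_lt (jacobiPoly_natDegree_le α β (K + 1)) (by omega))
    have h0 : (jacobiPoly α β K).coeff (K + 2) = 0 :=
      coeff_eq_zero_of_natDegree_lt (lt_of_le_of_lt (jacobiPoly_natDegree_le α β K) (by omega))
    simp only [jacobiPoly, jLC, coeff_sub, coeff_C_mul, sub_mul, coeff_mul_C]
    rw [mul_assoc (C (jA α β K)) X, coeff_C_mul, coeff_X_mul,
      jacobiPoly_coeff_top α β (K + 1)]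
    rw [h0, h1]
    ring

theorem jA_pos {α β : ℝ} (hαβ : -2 < α + β) (K : ℕ) : 0 < jA α β K := by
  have hK : (0:ℝ) ≤ (K : ℝ) := Nat.cast_nonneg K
  apply div_pos <;> nlinarith

theorem jLC_pos {α β : ℝ} (hαβ : -2 < α + β) : ∀ k, 0 < jLC α β k
  | 0 => by norm_num [jLC]
  | 1 => by simp only [jLC]; linarith
  | K + 2 => by
    simp only [jLC]
    exact mul_pos (jA_pos hαβ K) (jLC_pos hαβ (K + 1))

theorem jacobiPoly_natDegree {α β : ℝ} (hαβ : -2 < α + β) (k : ℕ) :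
    (jacobiPoly α β k).natDegree = k :=
  le_antisymm (jacobiPoly_natDegree_le α β k)
    (le_natDegree_of_ne_zero (by rw [jacobiPoly_coeff_top]; exact (jLC_pos hαβ k).ne'))

theorem jacobiPoly_ne_zero {α β : ℝ} (hαβ : -2 < α + β) (k : ℕ) :
    jacobiPoly α β k ≠ 0 := fun h => by
  have := jacobiPoly_coeff_top α β k
  rw [h] at this
  exact (jLC_pos hαβ k).ne' (by simpa using this.symm)

theorem jacobiPoly_leadingCoeff {α β : ℝ} (hαβ : -2 < α + β) (k : ℕ) :
    (jacobiPoly α β k).leadingCoeff = jLC α β k := by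
  rw [leadingCoeff, jacobiPoly_natDegree hαβ, jacobiPoly_coeff_top]

/-- `Bv β k = ∏_{i=1}^k (β+i)/i` -/
noncomputable def Bv (β : ℝ) : ℕ → ℝ
  | 0 => 1
  | k + 1 => Bv β k * (β + (k : ℝ) + 1) / ((k : ℝ) + 1)

theorem Bv_pos {β : ℝ} (hβ : -1 < β) : ∀ k, 0 < Bv β k
  | 0 => by norm_num [Bv]
  | k + 1 => by
    have hk : (0:ℝ) ≤ (k : ℝ) := Nat.cast_nonneg k
    have := Bv_pos hβ k
    apply div_pos (mul_pos this (by linarith)) (by linarith)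

set_option maxHeartbeats 2000000 in
theorem jacobi_step_eval (α β : ℝ) (K : ℕ) (s b : ℝ)
    (h1 : 2 * ((K:ℝ) + 1) + α + β ≠ 0) (h2 : ((K:ℝ) + 1) + α + β + 1 ≠ 0)
    (h3 : (K:ℝ) + 1 + 1 ≠ 0) (h5 : (K:ℝ) + 1 ≠ 0) :
    (jA α β K * (-1) - jB α β K) * (s * -1 * (b * (β + (K:ℝ) + 1) / ((K:ℝ) + 1)))
      - jC α β K * (s * b)
    = s * -1 * -1 * ((b * (β + (K:ℝ) + 1) / ((K:ℝ) + 1)) * (β + ((K:ℝ) + 1) + 1) /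
        (((K:ℝ) + 1) + 1)) := by
  simp only [jA, jB, jC]
  generalize (K:ℝ) = r at *
  field_simp
  ring

set_option maxHeartbeats 4000000 in
theorem jacobi_step_deriv (α β : ℝ) (K : ℕ) (s b : ℝ)
    (h1 : 2 * ((K:ℝ) + 1) + α + β ≠ 0) (h2 : ((K:ℝ) + 1) + α + β + 1 ≠ 0)
    (h3 : (K:ℝ) + 1 + 1 ≠ 0) (h4 : β + 1 ≠ 0) (h5 : (K:ℝ) + 1 ≠ 0) :
    jA α β K * (s * -1 * (b * (β + (K:ℝ) + 1) / ((K:ℝ) + 1)))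
      + (jA α β K * (-1) - jB α β K) *
        (s * -1 * -1 * (((K:ℝ) + 1) * (((K:ℝ) + 1) + α + β + 1) / (2 * (β + 1))) *
          (b * (β + (K:ℝ) + 1) / ((K:ℝ) + 1)))
      - jC α β K * (s * -1 * ((K:ℝ) * ((K:ℝ) + α + β + 1) / (2 * (β + 1))) * b)
    = s * -1 * -1 * -1 * (((K:ℝ) + 2) * (((K:ℝ) + 2) + α + β + 1) / (2 * (β + 1))) *
        ((b * (β + (K:ℝ) + 1) / ((K:ℝ) + 1)) * (β + ((K:ℝ) + 1) + 1) / (((K:ℝ) + 1) + 1)) := by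
  simp only [jA, jB, jC]
  generalize (K:ℝ) = r at *
  field_simp
  ring

theorem jacobi_eval_neg_one {α β : ℝ} (hα : -1 < α) (hβ : -1 < β) : ∀ k : ℕ,
    (jacobiPoly α β k).eval (-1) = (-1 : ℝ) ^ k * Bv β k ∧
    ((jacobiPoly α β k).derivative).eval (-1) =
      (-1 : ℝ) ^ (k + 1) * ((k : ℝ) * ((k : ℝ) + α + β + 1) / (2 * (β + 1))) * Bv β k
  | 0 => by norm_num [jacobiPoly, Bv]
  | 1 => by
    have hβ1 : β + 1 ≠ 0 := by linarith
    constructor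
    · simp [jacobiPoly, Bv]; ring
    · simp [jacobiPoly, Bv]
      field_simp
      ring
  | K + 2 => by
    obtain ⟨e1, d1⟩ := jacobi_eval_neg_one hα hβ (K + 1)
    obtain ⟨e0, d0⟩ := jacobi_eval_neg_one hα hβ K
    have hK : (0:ℝ) ≤ (K : ℝ) := Nat.cast_nonneg K
    have h1 : (2 * ((K : ℝ) + 1) + α + β) ≠ 0 := by nlinarith
    have h2 : ((K : ℝ) + 1) + α + β + 1 ≠ 0 := by nlinarith
    have h3 : (K : ℝ) + 1 + 1 ≠ 0 := by nlinarith
    have h4 : β + 1 ≠ 0 := by linarith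
    have h5 : (K : ℝ) + 1 ≠ 0 := by nlinarith
    constructor
    · simp only [jacobiPoly, eval_sub, eval_mul, eval_C, eval_X, e1, e0, Bv, pow_succ]
      push_cast
      linear_combination jacobi_step_eval α β K ((-1:ℝ)^K) (Bv β K) h1 h2 h3 h5
    · simp only [jacobiPoly, derivative_sub, derivative_mul, derivative_C, derivative_X,
        eval_sub, eval_mul, eval_add, eval_C, eval_X, eval_zero, zero_mul, mul_one,
        zero_add, add_zero, e1, d1, d0, Bv, pow_succ]
      push_cast
      linear_combination jacobi_step_deriv α β K ((-1:ℝ)^K) (Bv β K) h1 h2 h3 h4 h5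

theorem eq_C_mul_prod {p : ℝ[X]} {s : Finset ℝ} (hdeg : p.natDegree = s.card)
    (hp : p ≠ 0) (hr : ∀ a ∈ s, p.eval a = 0) :
    p = C p.leadingCoeff * ∏ a ∈ s, (X - C a) := by
  have hle : s.val ≤ p.roots := by
    rw [Multiset.le_iff_count]
    intro a
    by_cases ha : a ∈ s
    · rw [Multiset.count_eq_one_of_mem s.nodup ha]
      exact Multiset.one_le_count_iff_mem.2 (Polynomial.mem_roots'.2 ⟨hp, hr a ha⟩)
    · rw [Multiset.count_eq_zero_of_notMem (by simpa using ha)]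
      exact Nat.zero_le _
  have hcard : Multiset.card p.roots = p.natDegree :=
    le_antisymm p.card_roots' (by
      rw [hdeg]
      exact Multiset.card_le_card hle)
  have heq : s.val = p.roots :=
    Multiset.eq_of_le_of_card_le hle (by rw [hcard, hdeg]; rfl)
  conv_lhs => rw [← C_leadingCoeff_mul_prod_multiset_X_sub_C hcard]
  rw [← heq, Finset.prod_eq_multiset_prod]

theorem sum_prod_erase_eq {ι : Type*} [DecidableEq ι] (s : Finset ι) (f : ι → ℝ)
    (hf : ∀ a ∈ s, f a ≠ 0) :
    ∑ a ∈ s, ∏ b ∈ s.erase a, f b = (∏ b ∈ s, f b) * ∑ a ∈ s, (f a)⁻¹ := by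
  rw [Finset.mul_sum]
  refine Finset.sum_congr rfl fun a ha => ?_
  rw [← Finset.prod_erase_mul s f ha]
  exact (mul_inv_cancel_right₀ (hf a ha) _).symm

/-- `glW u x t = ∏ i, (u t − u (x i))`. -/
noncomputable def glW (u : ℝ → ℝ) {n : ℕ} (x : Fin (n + 1) → ℝ) : ℝ → ℝ :=
  fun t => ∏ i, (u t - u (x i))

/-- Generalized Lagrange function `L_j(t) = κ_j ∏_{i ≠ j} (u t − u (x i))`,
with `κ_j = u'(x_j) / w'(x_j)`. -/
noncomputable def glL (u : ℝ → ℝ) {n : ℕ} (x : Fin (n + 1) → ℝ) (j : Fin (n + 1)) : ℝ → ℝ :=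
  fun t => (deriv u (x j) / deriv (glW u x) (x j)) *
    ∏ i ∈ Finset.univ.erase j, (u t - u (x i))

theorem gl_jacobi_radau_first_diag (α β : ℝ) (hα : -1 < α) (hβ : -1 < β)
    (n : ℕ) (hn : 1 ≤ n) (u : ℝ → ℝ) (x : Fin (n + 1) → ℝ)
    (hu : Differentiable ℝ u)
    (hu2 : Differentiable ℝ (deriv u))
    (hx : Function.Injective x)
    (hux : Function.Injective (u ∘ x))
    (hu' : ∀ i, deriv u (x i) ≠ 0)
    (hfirst : u (x 0) = -1)
    (hroots : ∀ i : Fin (n + 1), 0 < (i : ℕ) → jacobiP α (β + 1) n (u (x i)) = 0) :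
    deriv (glL u x 0) (x 0) =
      -(deriv u (x 0)) * (n : ℝ) * (α + β + (n : ℝ) + 2) / (2 * (β + 2)) := by
  classical
  have hβ1 : (-1 : ℝ) < β + 1 := by linarith
  have hαβ : (-2 : ℝ) < α + (β + 1) := by linarith
  have huxinj : ∀ {a b : Fin (n+1)}, u (x a) = u (x b) → a = b := fun h => hux h
  -- the root set
  set s : Finset ℝ := (Finset.univ.erase (0 : Fin (n+1))).image (fun i => u (x i)) with hs
  have hscard : s.card = n := by
    rw [hs, Finset.card_image_of_injOn (fun a _ b _ h => huxinj h),
      Finset.card_erase_of_mem (Finset.mem_univ 0), Finset.card_univ, Fintype.card_fin]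
    omega
  set J := jacobiPoly α (β + 1) n with hJ
  have hJdeg : J.natDegree = s.card := by rw [jacobiPoly_natDegree hαβ, hscard]
  have hJne : J ≠ 0 := jacobiPoly_ne_zero hαβ n
  have hJroots : ∀ a ∈ s, J.eval a = 0 := by
    intro a ha
    obtain ⟨i, hiT, rfl⟩ := Finset.mem_image.1 ha
    have hi0 : (i : ℕ) ≠ 0 := by
      have h := (Finset.mem_erase.1 hiT).1
      exact fun h' => h (Fin.ext (by rw [h', Fin.val_zero]))
    rw [hJ, jacobiPoly_eval]
    exact hroots i (Nat.pos_of_ne_zero hi0)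
  have hfact := eq_C_mul_prod hJdeg hJne hJroots
  have hlcne : J.leadingCoeff ≠ 0 := by
    rw [jacobiPoly_leadingCoeff hαβ]
    exact (jLC_pos hαβ n).ne'
  have hfne : ∀ a ∈ s, (-1 : ℝ) - a ≠ 0 := by
    intro a ha
    obtain ⟨i, hiT, rfl⟩ := Finset.mem_image.1 ha
    have hi0 := (Finset.mem_erase.1 hiT).1
    rw [← hfirst]
    exact sub_ne_zero.2 fun h => hi0 (huxinj h).symm
  obtain ⟨hE, hD⟩ := jacobi_eval_neg_one (β := β + 1) hα hβ1 n
  have hg : ∀ t : ℝ, J.eval t = J.leadingCoeff * ∏ a ∈ s, (t - a) := by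
    intro t
    conv_lhs => rw [hfact]
    rw [eval_mul, eval_C, eval_prod]
    simp
  have hDer : HasDerivAt (fun t : ℝ => J.leadingCoeff * ∏ a ∈ s, (t - a))
      (J.leadingCoeff * ∑ a ∈ s, (∏ b ∈ s.erase a, ((-1 : ℝ) - b)) * 1) (-1) := by
    have hp : HasDerivAt (fun t : ℝ => ∏ a ∈ s, (t - a))
        (∑ a ∈ s, (∏ b ∈ s.erase a, ((-1 : ℝ) - b)) • (1 : ℝ)) (-1) :=
      HasDerivAt.fun_finsetProd (fun a _ => (hasDerivAt_id _).sub_const a)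
    simpa [smul_eq_mul] using hp.const_mul J.leadingCoeff
  have hDeval : (derivative J).eval (-1)
      = J.leadingCoeff * ∑ a ∈ s, ∏ b ∈ s.erase a, ((-1 : ℝ) - b) := by
    have h1 : deriv (fun t : ℝ => J.eval t) (-1) = (derivative J).eval (-1) := by
      exact Polynomial.deriv (p := J)
    have h2 : (fun t : ℝ => J.eval t) = fun t => J.leadingCoeff * ∏ a ∈ s, (t - a) := funext hg
    rw [← h1, h2, hDer.deriv]
    simp
  have hBne : Bv (β + 1) n ≠ 0 := (Bv_pos hβ1 n).ne'
  have hβ2 : (β : ℝ) + 2 ≠ 0 := by linarith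
  have hpow : ((-1 : ℝ) ^ n) ≠ 0 := pow_ne_zero n (by norm_num)
  -- the sum of inverses of (-1 - a)
  have hsum : ∑ a ∈ s, ((-1 : ℝ) - a)⁻¹
      = -((n : ℝ) * ((n : ℝ) + α + β + 2)) / (2 * (β + 2)) := by
    have h2 : J.leadingCoeff * ∏ a ∈ s, ((-1 : ℝ) - a) = (-1 : ℝ) ^ n * Bv (β + 1) n := by
      rw [← hg, hE]
    have h3 : ((-1 : ℝ) ^ n * Bv (β + 1) n) * ∑ a ∈ s, ((-1 : ℝ) - a)⁻¹
        = (-1 : ℝ) ^ (n + 1) * ((n : ℝ) * ((n : ℝ) + α + (β + 1) + 1) / (2 * ((β + 1) + 1)))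
            * Bv (β + 1) n := by
      rw [← h2, mul_assoc, ← sum_prod_erase_eq s _ hfne, ← hDeval, hD]
    have h4 : ∑ a ∈ s, ((-1 : ℝ) - a)⁻¹
        = -((n : ℝ) * ((n : ℝ) + α + (β + 1) + 1) / (2 * ((β + 1) + 1))) := by
      apply mul_left_cancel₀ (mul_ne_zero hpow hBne)
      rw [h3, pow_succ]
      ring
    rw [h4]
    ring
  -- analytic part
  have hderiv_each : ∀ (i : Fin (n + 1)),
      HasDerivAt (fun t => u t - u (x i)) (deriv u (x 0)) (x 0) :=
    fun i => ((hu (x 0)).hasDerivAt).sub_const _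
  have hWd : HasDerivAt (glW u x)
      (deriv u (x 0) * ∏ i ∈ Finset.univ.erase 0, (u (x 0) - u (x i))) (x 0) := by
    have h := HasDerivAt.fun_finsetProd (u := Finset.univ)
      (f := fun (i : Fin (n+1)) t => u t - u (x i)) (f' := fun _ => deriv u (x 0)) (x := x 0)
      (fun i _ => hderiv_each i)
    have hsum0 : ∑ i : Fin (n+1),
        (∏ j ∈ Finset.univ.erase i, (u (x 0) - u (x j))) • deriv u (x 0)
        = deriv u (x 0) * ∏ i ∈ Finset.univ.erase 0, (u (x 0) - u (x i)) := by
      rw [Finset.sum_eq_single_of_mem 0 (Finset.mem_univ 0)]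
      · rw [smul_eq_mul, mul_comm]
      · intro i _ hi
        have h0 : (0 : Fin (n + 1)) ∈ Finset.univ.erase i :=
          Finset.mem_erase.2 ⟨fun h => hi h.symm, Finset.mem_univ 0⟩
        rw [Finset.prod_eq_zero h0 (by simp), zero_smul]
    rw [← hsum0]
    exact h
  have hPne : (∏ i ∈ Finset.univ.erase (0 : Fin (n+1)), (u (x 0) - u (x i))) ≠ 0 :=
    Finset.prod_ne_zero_iff.2 fun i hi =>
      sub_ne_zero.2 fun h => (Finset.mem_erase.1 hi).1 (huxinj h).symm
  have hfne' : ∀ i ∈ Finset.univ.erase (0 : Fin (n+1)), u (x 0) - u (x i) ≠ 0 :=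
    fun i hi => sub_ne_zero.2 fun h => (Finset.mem_erase.1 hi).1 (huxinj h).symm
  have hLd : HasDerivAt (glL u x 0)
      ((deriv u (x 0) / deriv (glW u x) (x 0)) *
        ∑ j ∈ Finset.univ.erase (0 : Fin (n+1)),
          (∏ i ∈ (Finset.univ.erase (0 : Fin (n+1))).erase j, (u (x 0) - u (x i)))
            * deriv u (x 0)) (x 0) := by
    have h := HasDerivAt.fun_finsetProd (u := Finset.univ.erase (0 : Fin (n+1)))
      (f := fun (i : Fin (n+1)) t => u t - u (x i)) (f' := fun _ => deriv u (x 0)) (x := x 0)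
      (fun i _ => hderiv_each i)
    have h2 := h.const_mul (deriv u (x 0) / deriv (glW u x) (x 0))
    exact h2
  have hmain : deriv (glL u x 0) (x 0)
      = deriv u (x 0) * ∑ j ∈ Finset.univ.erase (0 : Fin (n+1)), (u (x 0) - u (x j))⁻¹ := by
    have hd0 : deriv u (x 0) ≠ 0 := hu' 0
    rw [hLd.deriv, hWd.deriv, ← Finset.sum_mul, sum_prod_erase_eq _ _ hfne']
    field_simp
  have hsum_img : ∑ j ∈ Finset.univ.erase (0 : Fin (n+1)), (u (x 0) - u (x j))⁻¹
      = ∑ a ∈ s, ((-1 : ℝ) - a)⁻¹ := by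
    rw [hs, Finset.sum_image (fun a _ b _ h => huxinj h)]
    exact Finset.sum_congr rfl fun j _ => by rw [hfirst]
  rw [hmain, hsum_img, hsum]
  ring
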